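/- For the 6×6 complex matrices S = [[1,1],[1,−1]] ⊗ S₃ and T = diag(1,i) ⊗ diag(1, e^{2πi/7}, e^{10πi/7}), one has p₊ · p₋ = D², where p₊ = Σ_j S_{0j}² T_{jj}, p₋ = Σ_j S_{0j}² T_{jj}^{−1}, and D² = Σ_j S_{0j}². -/
import Mathlib


open Kronecker

/-- `d = 2 cos(π/7)`. -/
noncomputable def d : ℝ := 2 * Real.cos (Real.pi / 7)

/-- The 3×3 matrix with rows `(1, d, d²−1)`, `(d, −(d²−1), 1)`, `(d²−1, 1, −d)`,
viewed over `ℂ`. -/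
noncomputable def S₃ : Matrix (Fin 3) (Fin 3) ℂ :=
  !![1, (d : ℂ), (d : ℂ) ^ 2 - 1;
     (d : ℂ), -((d : ℂ) ^ 2 - 1), 1;
     (d : ℂ) ^ 2 - 1, 1, -(d : ℂ)]

/-- The 6×6 complex matrix `S = [[1,1],[1,−1]] ⊗ S₃` (Kronecker product). -/
noncomputable def S : Matrix (Fin 2 × Fin 3) (Fin 2 × Fin 3) ℂ :=
  (!![1, 1; 1, -1] : Matrix (Fin 2) (Fin 2) ℂ) ⊗ₖ S₃

/-- The 6×6 diagonal complex matrix `T = diag(1,i) ⊗ diag(1, e^{2πi/7}, e^{10πi/7})`. -/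
noncomputable def T : Matrix (Fin 2 × Fin 3) (Fin 2 × Fin 3) ℂ :=
  (Matrix.diagonal ![1, Complex.I]) ⊗ₖ
    (Matrix.diagonal ![1, Complex.exp (2 * Real.pi * Complex.I / 7),
      Complex.exp (10 * Real.pi * Complex.I / 7)])

/-- `p₊ = Σ_j S_{0j}² T_{jj}` (the first row of `S` is the row indexed by `(0,0)`). -/
noncomputable def pPlus : ℂ :=
  ∑ k : Fin 2 × Fin 3, (S ((0 : Fin 2), (0 : Fin 3)) k) ^ 2 * T k k

/-- `p₋ = Σ_j S_{0j}² T_{jj}⁻¹`. -/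
noncomputable def pMinus : ℂ :=
  ∑ k : Fin 2 × Fin 3, (S ((0 : Fin 2), (0 : Fin 3)) k) ^ 2 * (T k k)⁻¹

/-- `D² = Σ_j S_{0j}²`. -/
noncomputable def Dsq : ℂ :=
  ∑ k : Fin 2 × Fin 3, (S ((0 : Fin 2), (0 : Fin 3)) k) ^ 2

set_option maxHeartbeats 2000000 in
theorem pPlus_mul_pMinus : pPlus * pMinus = Dsq := by
  set a : ℂ := Complex.exp (↑Real.pi * Complex.I / 7) with ha
  have h1 : ((Real.pi / 7 : ℝ) : ℂ) * Complex.I = ↑Real.pi * Complex.I / 7 := by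
    push_cast; ring
  have ha7 : a ^ 7 = -1 := by
    rw [ha, ← Complex.exp_nat_mul,
      show ((7 : ℕ) : ℂ) * (↑Real.pi * Complex.I / 7) = ↑Real.pi * Complex.I by push_cast; ring,
      Complex.exp_pi_mul_I]
  have haim : a.im = Real.sin (Real.pi / 7) := by
    rw [ha, ← h1, Complex.exp_ofReal_mul_I_im]
  have hane : a + 1 ≠ 0 := by
    intro h
    have h2 : a.im = 0 := by
      rw [show a = -1 by linear_combination h]; simp
    have hs : 0 < Real.sin (Real.pi / 7) :=
      Real.sin_pos_of_pos_of_lt_pi (by positivity) (by linarith [Real.pi_pos])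
    rw [haim] at h2; linarith
  have hΦ : a ^ 6 - a ^ 5 + a ^ 4 - a ^ 3 + a ^ 2 - a + 1 = 0 := by
    have h0 : (a + 1) * (a ^ 6 - a ^ 5 + a ^ 4 - a ^ 3 + a ^ 2 - a + 1) = 0 := by
      linear_combination ha7
    exact (mul_eq_zero.mp h0).resolve_left hane
  have hinv : a⁻¹ = -a ^ 6 := inv_eq_of_mul_eq_one_right (by linear_combination -ha7)
  have hd : (d : ℂ) = a + a⁻¹ := by
    rw [show ((d : ℝ) : ℂ) = 2 * Complex.cos ((Real.pi / 7 : ℝ) : ℂ) by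
        rw [d]; push_cast [Complex.ofReal_cos]; ring,
      Complex.cos, neg_mul, Complex.exp_neg, h1, ← ha]
    ring
  have he2 : Complex.exp (2 * ↑Real.pi * Complex.I / 7) = a ^ 2 := by
    rw [ha, ← Complex.exp_nat_mul]; congr 1; push_cast; ring
  have he10 : Complex.exp (10 * ↑Real.pi * Complex.I / 7) = a ^ 10 := by
    rw [ha, ← Complex.exp_nat_mul]; congr 1; push_cast; ring
  simp only [pPlus, pMinus, Dsq, S, T, S₃, Fintype.sum_prod_type, Fin.sum_univ_three,
    Fin.sum_univ_two, Matrix.kroneckerMap_apply, Matrix.diagonal_apply_eq, Matrix.cons_val',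
    Matrix.cons_val_zero, Matrix.cons_val_one, Matrix.head_cons, Matrix.head_fin_const,
    Matrix.empty_val', Matrix.cons_val_fin_one, Matrix.of_apply, Matrix.cons_val_two,
    Matrix.tail_cons, he2, he10, hd]
  simp only [mul_inv, ← inv_pow, hinv, Complex.inv_I, inv_one]
  linear_combination ((2) * a ^ 112 + (2) * a ^ 111 + (-16) * a ^ 107 + (-16) * a ^ 106 + (-2) * a ^ 105 + (-2) * a ^ 104 + (56) * a ^ 102 + (56) * a ^ 101 + (8) * a ^ 100 + (8) * a ^ 99 + (2) * a ^ 98 + (-110) * a ^ 97 + (-112) * a ^ 96 + (-8) * a ^ 95 + (-8) * a ^ 94 + (-8) * a ^ 93 + (134) * a ^ 92 + (140) * a ^ 91 + (-10) * a ^ 90 + (-8) * a ^ 89 + (20) * a ^ 88 + (-104) * a ^ 87 + (-116) * a ^ 86 + (26) * a ^ 85 + (20) * a ^ 84 + (-38) * a ^ 83 + (46) * a ^ 82 + (66) * a ^ 81 + (-20) * a ^ 80 + (-8) * a ^ 79 + (48) * a ^ 78 + (-2) * a ^ 77 + (-26) * a ^ 76 + (10) * a ^ 75 + (-2) * a ^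 74 + (-36) * a ^ 73 + (-16) * a ^ 72 + (-14) * a ^ 70 + (-6) * a ^ 69 + (16) * a ^ 68 + (16) * a ^ 67 + (12) * a ^ 66 + (20) * a ^ 65 + (18) * a ^ 64 + (4) * a ^ 63 + (-4) * a ^ 62 + (-6) * a ^ 61 + (-12) * a ^ 60 + (-16) * a ^ 59 + (-16) * a ^ 58 + (-14) * a ^ 57 + (-8) * a ^ 56 + (8) * a ^ 54 + (14) * a ^ 53 + (18) * a ^ 52 + (18) * a ^ 51 + (14) * a ^ 50 + (8) * a ^ 49 + (-20) * a ^ 47 + (-26) * a ^ 46 + (-18) * a ^ 45 + (-18) * a ^ 44 + (-14) * a ^ 43 + (22) * a ^ 42 + (30) * a ^ 41 + (16) * a ^ 40 + (22) * a ^ 39 + (18) * a ^ 38 + (-22) * a ^ 37 + (-26) * a ^ 36 + (-6) * a ^ 35 + (-14) * a ^ 34 + (-16) * a ^ 33 + (10) * a ^ 32 + (14) * a ^ 31 + (-2) * a ^ 30 + (2) * a ^ 29 + (10) * a ^ 28 + (-2) * a ^ 27 + (-4) * a ^ 26 + (6) * a ^ 25 + (2) * a ^ 24 + (-10) * a ^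 23 + (4) * a ^ 21 + (-2) * a ^ 20 + (8) * a ^ 18 + (4) * a ^ 17 + (-2) * a ^ 16 + (-4) * a ^ 15 + (-4) * a ^ 14 + (-2) * a ^ 13 + (-2) * a ^ 12 + (2) * a ^ 11 + (4) * a ^ 10 + (2) * a ^ 9 + (-2) * a ^ 8 + (-2) * a ^ 7 + (2) * a ^ 3 + (2) * a ^ 2 + (-2) * a ^ 1 + (-2)) * hΦ +
    (-((1 + (a + -a ^ 6) ^ 2 * a ^ 2 + ((a + -a ^ 6) ^ 2 - 1) ^ 2 * a ^ 10) *
       (1 + (a + -a ^ 6) ^ 2 * a ^ 12 + ((a + -a ^ 6) ^ 2 - 1) ^ 2 * a ^ 60))) * Complex.I_sq
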